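/- For a weak contact semilattice S, the following are equivalent: (1) S embeds into a Boolean algebra with overlap contact; (2) S embeds into a distributive lattice with additive contact; (3) S satisfies conditions (D1) and (D2). -/

import Mathlib

universe u

section AddDistrib

variable {L : Type*} [DistribLattice L] [OrderBot L] (δL : L → L → Prop)

private lemma delta_finsup {ι : Type*}
    (hEmp : ∀ a b : L, δL a b → ⊥ < a ∧ ⊥ < b)
    (hAdd : ∀ a b c : L, δL a (b ⊔ c) → δL a b ∨ δL a c)
    (x : L) (T : Finset ι) (v : ι → L) (h : δL x (T.sup v)) : ∃ i ∈ T, δL x (v i) := by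
  classical
  induction T using Finset.cons_induction with
  | empty =>
      rw [Finset.sup_empty] at h
      exact absurd (hEmp _ _ h).2 (lt_irrefl _)
  | cons a T ha ih =>
      rw [Finset.sup_cons] at h
      rcases hAdd _ _ _ h with h1 | h2
      · exact ⟨a, Finset.mem_cons_self _ _, h1⟩
      · obtain ⟨i, hi, hd⟩ := ih h2
        exact ⟨i, Finset.mem_cons.2 (Or.inr hi), hd⟩

private lemma foldr_inf_pull {α : Type*} (φ : α → L) (u w : L) (l : List α) :
    List.foldr (fun q acc => φ q ⊓ acc) (u ⊓ w) l
      = u ⊓ List.foldr (fun q acc => φ q ⊓ acc) w l := by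
  induction l with
  | nil => rfl
  | cons a l ih => simp only [List.foldr_cons, ih, inf_left_comm]

private lemma foldr_inf_le {α : Type*} (φ : α → L) (w : L) (l : List α) {aa : α}
    (h : aa ∈ l) : List.foldr (fun q acc => φ q ⊓ acc) w l ≤ φ aa := by
  induction l with
  | nil => cases h
  | cons a l ih =>
      rcases List.mem_cons.1 h with rfl | h'
      · exact inf_le_left
      · exact le_trans inf_le_right (ih h')

private lemma le_foldr_inf {α : Type*} (φ : α → L) (w : L) (l : List α) {b : L}
    (hw : b ≤ w) (h : ∀ y ∈ l, b ≤ φ y) :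
    b ≤ List.foldr (fun q acc => φ q ⊓ acc) w l := by
  induction l with
  | nil => exact hw
  | cons a l ih =>
      exact le_inf (h a List.mem_cons_self) (ih fun y hy => h y (List.mem_cons.2 (Or.inr hy)))

private lemma extract_transversal {n : ℕ}
    (hEmp : ∀ a b : L, δL a b → ⊥ < a ∧ ⊥ < b)
    (hAdd : ∀ a b c : L, δL a (b ⊔ c) → δL a b ∨ δL a c)
    (c : Fin n → Fin 2 → L) (x : L) :
    ∀ (l : List (Fin n → Fin 2)) (w : L),
      δL x (List.foldr (fun f acc => (Finset.univ.sup fun i => c i (f i)) ⊓ acc) w l) →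
      ∃ r : List ((Fin n → Fin 2) × Fin n),
        r.map Prod.fst = l ∧
        δL x (List.foldr (fun q acc => c q.2 (q.1 q.2) ⊓ acc) w r) := by
  intro l
  induction l with
  | nil => exact fun w h => ⟨[], rfl, h⟩
  | cons f l ih =>
      intro w h
      rw [List.foldr_cons, Finset.sup_inf_distrib_right] at h
      obtain ⟨i, _, hi⟩ := delta_finsup δL hEmp hAdd x _ _ h
      rw [← foldr_inf_pull] at hi
      obtain ⟨r, hr, hd⟩ := ih (c i (f i) ⊓ w) hi
      refine ⟨(f, i) :: r, by simp [hr], ?_⟩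
      rw [foldr_inf_pull] at hd
      simpa only [List.foldr_cons] using hd

private lemma D2_of_additive {n : ℕ}
    (hSym : ∀ a b : L, δL a b → δL b a)
    (hEmp : ∀ a b : L, δL a b → ⊥ < a ∧ ⊥ < b)
    (hExt : ∀ a b a₁ b₁ : L, δL a b → a ≤ a₁ → b ≤ b₁ → δL a₁ b₁)
    (hRef : ∀ m : L, m ≠ ⊥ → δL m m)
    (hAdd : ∀ a b c : L, δL a (b ⊔ c) → δL a b ∨ δL a c)
    (a b : L) (c : Fin n → Fin 2 → L)
    (hc : ∀ i, ¬ δL (c i 0) (c i 1))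
    (hyp : ∀ f : Fin n → Fin 2,
      b ≤ Finset.univ.sup (fun i => c i (f i)) ∨
      a ≤ Finset.univ.sup (fun i => c i (f i))) :
    ¬ δL b a := by
  classical
  intro hba
  set s : (Fin n → Fin 2) → L := fun f => Finset.univ.sup (fun i => c i (f i)) with hs
  set l₀ : List (Fin n → Fin 2) :=
    (Finset.univ.filter (fun f => b ≤ s f)).toList with hl0
  set l₁ : List (Fin n → Fin 2) :=
    (Finset.univ.filter (fun f => ¬ b ≤ s f)).toList with hl1
  have hmem0 : ∀ f ∈ l₀, b ≤ s f := by
    intro f hf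
    exact (Finset.mem_filter.1 (Finset.mem_toList.1 hf)).2
  have hmem1 : ∀ f ∈ l₁, a ≤ s f := by
    intro f hf
    have := (Finset.mem_filter.1 (Finset.mem_toList.1 hf)).2
    rcases hyp f with h | h
    · exact absurd h this
    · exact h
  have hall : ∀ f, f ∈ l₀ ∨ f ∈ l₁ := by
    intro f
    by_cases h : b ≤ s f
    · exact Or.inl (Finset.mem_toList.2 (Finset.mem_filter.2 ⟨Finset.mem_univ f, h⟩))
    · exact Or.inr (Finset.mem_toList.2 (Finset.mem_filter.2 ⟨Finset.mem_univ f, h⟩))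
  have hu : b ≤ List.foldr (fun f acc => s f ⊓ acc) b l₀ :=
    le_foldr_inf _ _ _ le_rfl hmem0
  have hv : a ≤ List.foldr (fun f acc => s f ⊓ acc) a l₁ :=
    le_foldr_inf _ _ _ le_rfl hmem1
  have huv : δL (List.foldr (fun f acc => s f ⊓ acc) b l₀)
      (List.foldr (fun f acc => s f ⊓ acc) a l₁) := hExt _ _ _ _ hba hu hv
  obtain ⟨r₁, hr₁, hd₁⟩ := extract_transversal δL hEmp hAdd c _ l₁ a huv
  set T₁ : L := List.foldr (fun q acc => c q.2 (q.1 q.2) ⊓ acc) a r₁ with hT1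
  obtain ⟨r₀, hr₀, hd₀⟩ := extract_transversal δL hEmp hAdd c _ l₀ b (hSym _ _ hd₁)
  set T₀ : L := List.foldr (fun q acc => c q.2 (q.1 q.2) ⊓ acc) b r₀ with hT0
  have hdT : δL T₀ T₁ := hSym _ _ hd₀
  have hT0le : ∀ q ∈ r₀, T₀ ≤ c q.2 (q.1 q.2) := fun q hq => foldr_inf_le _ _ _ hq
  have hT1le : ∀ q ∈ r₁, T₁ ≤ c q.2 (q.1 q.2) := fun q hq => foldr_inf_le _ _ _ hq
  have hT0ne : T₀ ≠ ⊥ := ne_bot_of_gt (hEmp _ _ hdT).1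
  have hT1ne : T₁ ≠ ⊥ := ne_bot_of_gt (hEmp _ _ hdT).2
  set P : Fin n → Prop := fun i =>
    (∃ q ∈ r₀, q.2 = i ∧ q.1 i = (0 : Fin 2)) ∨ (∃ q ∈ r₁, q.2 = i ∧ q.1 i = (0 : Fin 2))
    with hP
  set h : Fin n → Fin 2 := fun i => if P i then 1 else 0 with hh
  have hPle : ∀ i, P i → (T₀ ≤ c i 0 ∨ T₁ ≤ c i 0) := by
    intro i hPi
    rcases hPi with ⟨q, hq, hq2, hq10⟩ | ⟨q, hq, hq2, hq10⟩
    · left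
      have h' := hT0le q hq
      rw [hq2] at h'; rw [hq10] at h'; exact h'
    · right
      have h' := hT1le q hq
      rw [hq2] at h'; rw [hq10] at h'; exact h'
  rcases hall h with hmem | hmem
  · rw [← hr₀] at hmem
    obtain ⟨q, hq, hq1⟩ := List.mem_map.1 hmem
    have hTle : T₀ ≤ c q.2 (h q.2) := by
      have h' := hT0le q hq; rw [hq1] at h'; exact h'
    by_cases hPi : P q.2
    · have hhi : h q.2 = 1 := by simp only [hh]; exact if_pos hPi
      rw [hhi] at hTle
      rcases hPle q.2 hPi with h0 | h0
      · exact hc q.2 (hExt _ _ _ _ (hRef T₀ hT0ne) h0 hTle)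
      · exact hc q.2 (hSym _ _ (hExt _ _ _ _ hdT hTle h0))
    · have hhi : h q.2 = 0 := by simp only [hh]; exact if_neg hPi
      exact hPi (Or.inl ⟨q, hq, rfl, by rw [hq1, hhi]⟩)
  · rw [← hr₁] at hmem
    obtain ⟨q, hq, hq1⟩ := List.mem_map.1 hmem
    have hTle : T₁ ≤ c q.2 (h q.2) := by
      have h' := hT1le q hq; rw [hq1] at h'; exact h'
    by_cases hPi : P q.2
    · have hhi : h q.2 = 1 := by simp only [hh]; exact if_pos hPi
      rw [hhi] at hTle
      rcases hPle q.2 hPi with h0 | h0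
      · exact hc q.2 (hExt _ _ _ _ hdT h0 hTle)
      · exact hc q.2 (hExt _ _ _ _ (hRef T₁ hT1ne) h0 hTle)
    · have hhi : h q.2 = 0 := by simp only [hh]; exact if_neg hPi
      exact hPi (Or.inr ⟨q, hq, rfl, by rw [hq1, hhi]⟩)

private lemma D1_of_distrib
    (hExt : ∀ a b a₁ b₁ : L, δL a b → a ≤ a₁ → b ≤ b₁ → δL a₁ b₁)
    (hRef : ∀ m : L, m ≠ ⊥ → δL m m)
    (a b c₀ c₁ : L) (h0 : b ≤ a ⊔ c₀) (h1 : b ≤ a ⊔ c₁)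
    (hnc : ¬ δL c₀ c₁) : b ≤ a := by
  have hb : b ≤ a ⊔ (c₀ ⊓ c₁) := by
    rw [sup_inf_left]; exact le_inf h0 h1
  by_cases hm : c₀ ⊓ c₁ = ⊥
  · rwa [hm, sup_bot_eq] at hb
  · exact (hnc (hExt _ _ _ _ (hRef _ hm) inf_le_left inf_le_right)).elim
end AddDistrib

set_option linter.unusedSectionVars false
set_option maxHeartbeats 1000000


private lemma chain_finite_subset {α : Type*} {C : Set (Set α)}
    (hC : IsChain (· ⊆ ·) C) (hne : C.Nonempty)
    {t : Set α} (ht : t.Finite) : t ⊆ ⋃₀ C → ∃ s ∈ C, t ⊆ s := by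
  refine Set.Finite.induction_on t ht ?_ ?_
  · intro _
    obtain ⟨s, hs⟩ := hne
    exact ⟨s, hs, Set.empty_subset s⟩
  · intro x t hx htf ih hsub
    obtain ⟨s₂, hs₂, ht₂⟩ := ih (fun y hy => hsub (Set.mem_insert_of_mem _ hy))
    obtain ⟨s₁, hs₁, hx₁⟩ := hsub (Set.mem_insert _ _)
    rcases hC.total hs₁ hs₂ with hss | hss
    · exact ⟨s₂, hs₂, Set.insert_subset_iff.2 ⟨hss hx₁, ht₂⟩⟩
    · exact ⟨s₁, hs₁, Set.insert_subset_iff.2 ⟨hx₁, ht₂.trans hss⟩⟩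

section Repr

variable {S : Type u} [SemilatticeSup S] [OrderBot S] (δ : S → S → Prop)

private def Npairs : Type u := {p : S × S // ¬ δ p.1 p.2}

private def pick (p : Npairs δ) (j : Fin 2) : S := if j = 0 then p.1.1 else p.1.2

@[simp] private lemma pick_zero (p : Npairs δ) : pick δ p 0 = p.1.1 := if_pos rfl

@[simp] private lemma pick_one (p : Npairs δ) : pick δ p 1 = p.1.2 := if_neg (by decide)

private def phi (a : S) : Set (Npairs δ → Fin 2) :=
  {f | ∀ T : Finset (Npairs δ), ¬ a ≤ T.sup (fun p => pick δ p (f p))}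

private lemma exists_choice_finset
    (hSym : ∀ a b : S, δ a b → δ b a)
    (hD2 : ∀ (n : ℕ) (a b : S) (c : Fin n → Fin 2 → S),
      (∀ i, ¬ δ (c i 0) (c i 1)) →
      (∀ f : Fin n → Fin 2,
        b ≤ Finset.univ.sup (fun i => c i (f i)) ∨
        a ≤ Finset.univ.sup (fun i => c i (f i))) →
      ¬ δ b a)
    (a b : S) (hab : δ a b) (H : Finset (Npairs δ)) :
    ∃ h : Npairs δ → Fin 2,
      ¬ a ≤ H.sup (fun p => pick δ p (h p)) ∧ ¬ b ≤ H.sup (fun p => pick δ p (h p)) := by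
  classical
  set m := H.card with hm
  set e : {x // x ∈ H} ≃ Fin m := H.equivFin with he
  set c : Fin m → Fin 2 → S := fun i j => pick δ (e.symm i) j with hc
  have hcnd : ∀ i, ¬ δ (c i 0) (c i 1) := by
    intro i
    simp only [hc, pick_zero, pick_one]
    exact ((e.symm i : {x // x ∈ H}) : Npairs δ).2
  have hnot : ¬ ∀ f : Fin m → Fin 2,
      b ≤ Finset.univ.sup (fun i => c i (f i)) ∨
      a ≤ Finset.univ.sup (fun i => c i (f i)) :=
    fun hyp => hD2 m a b c hcnd hyp (hSym a b hab)
  push_neg at hnot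
  obtain ⟨f, hfb, hfa⟩ := hnot
  set h : Npairs δ → Fin 2 := fun p => if hp : p ∈ H then f (e ⟨p, hp⟩) else 0 with hh
  have himg : (Finset.univ : Finset (Fin m)).image
      (fun i => ((e.symm i : {x // x ∈ H}) : Npairs δ)) = H := by
    ext p
    simp only [Finset.mem_image, Finset.mem_univ, true_and]
    constructor
    · rintro ⟨i, rfl⟩
      exact (e.symm i).2
    · intro hp
      refine ⟨e ⟨p, hp⟩, ?_⟩
      rw [Equiv.symm_apply_apply]
  have hsupeq : H.sup (fun p => pick δ p (h p)) = Finset.univ.sup (fun i => c i (f i)) := by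
    rw [← himg, Finset.sup_image]
    apply Finset.sup_congr rfl
    intro i _
    have hp : ((e.symm i : {x // x ∈ H}) : Npairs δ) ∈ H := (e.symm i).2
    have hhe : h ((e.symm i : {x // x ∈ H}) : Npairs δ) = f i := by
      simp only [hh, dif_pos hp]
      congr 1
      have hsub : (⟨((e.symm i : {x // x ∈ H}) : Npairs δ), hp⟩ : {x // x ∈ H}) = e.symm i :=
        Subtype.ext rfl
      rw [hsub, Equiv.apply_symm_apply]
    simp only [Function.comp, hhe, hc]
  exact ⟨h, by rw [hsupeq]; exact hfa, by rw [hsupeq]; exact hfb⟩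

private lemma exists_common_point
    (hSym : ∀ a b : S, δ a b → δ b a)
    (hD2 : ∀ (n : ℕ) (a b : S) (c : Fin n → Fin 2 → S),
      (∀ i, ¬ δ (c i 0) (c i 1)) →
      (∀ f : Fin n → Fin 2,
        b ≤ Finset.univ.sup (fun i => c i (f i)) ∨
        a ≤ Finset.univ.sup (fun i => c i (f i))) →
      ¬ δ b a)
    (a b : S) (hab : δ a b) :
    ∃ f, f ∈ phi δ a ∧ f ∈ phi δ b := by
  classical
  set 𝒮 : Set (Set (Npairs δ × Fin 2)) :=
    {s | (∀ p j j', (p, j) ∈ s → (p, j') ∈ s → j = j') ∧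
      ∀ H : Finset (Npairs δ), ∃ h : Npairs δ → Fin 2,
        (∀ p ∈ H, ∀ j, (p, j) ∈ s → h p = j) ∧
        ¬ a ≤ H.sup (fun p => pick δ p (h p)) ∧
        ¬ b ≤ H.sup (fun p => pick δ p (h p))} with h𝒮
  have hbase : (∅ : Set (Npairs δ × Fin 2)) ∈ 𝒮 := by
    constructor
    · intro p j j' hj _
      exact hj.elim
    · intro H
      obtain ⟨h, ha, hb⟩ := exists_choice_finset δ hSym hD2 a b hab H
      exact ⟨h, fun p _ j hj => hj.elim, ha, hb⟩
  have hchain : ∀ C ⊆ 𝒮, IsChain (· ⊆ ·) C → C.Nonempty → ∃ ub ∈ 𝒮, ∀ s ∈ C, s ⊆ ub := by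
    intro C hC hch hne
    refine ⟨⋃₀ C, ⟨?_, ?_⟩, fun s hs => Set.subset_sUnion_of_mem hs⟩
    · rintro p j j' hj hj'
      obtain ⟨s1, hs1, hj⟩ := hj
      obtain ⟨s2, hs2, hj'⟩ := hj'
      rcases hch.total hs1 hs2 with hss | hss
      · exact (hC hs2).1 p j j' (hss hj) hj'
      · exact (hC hs1).1 p j j' hj (hss hj')
    · intro H
      set CS : Set (Npairs δ × Fin 2) := {q ∈ ⋃₀ C | q.1 ∈ H} with hCS
      have hfin : CS.Finite := by
        apply Set.Finite.subset ((H.finite_toSet).prod (Set.finite_univ (α := Fin 2)))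
        rintro ⟨p, j⟩ ⟨_, hp⟩
        exact ⟨hp, Set.mem_univ _⟩
      obtain ⟨s', hs', hsub⟩ :=
        chain_finite_subset hch hne hfin (fun q hq => hq.1)
      obtain ⟨h, hagree, ha, hb⟩ := (hC hs').2 H
      refine ⟨h, ?_, ha, hb⟩
      intro p hp j hj
      exact hagree p hp j (hsub ⟨hj, hp⟩)
  obtain ⟨mset, -, hmax⟩ := zorn_subset_nonempty 𝒮 hchain ∅ hbase
  have hcons := hmax.1.1
  have hinv := hmax.1.2
  have htotal : ∀ p : Npairs δ, ∃ j, (p, j) ∈ mset := by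
    by_contra hcon
    push_neg at hcon
    obtain ⟨p, hp⟩ := hcon
    have hfail : ∀ j : Fin 2, insert (p, j) mset ∉ 𝒮 := by
      intro j hins
      have hsub : insert (p, j) mset ⊆ mset := hmax.2 hins (Set.subset_insert _ _)
      exact hp j (hsub (Set.mem_insert _ _))
    have hconsins : ∀ j : Fin 2, ∀ p' j1 j2,
        (p', j1) ∈ insert (p, j) mset → (p', j2) ∈ insert (p, j) mset → j1 = j2 := by
      intro j p' j1 j2 h1 h2
      rcases Set.mem_insert_iff.1 h1 with h1 | h1 <;>
        rcases Set.mem_insert_iff.1 h2 with h2 | h2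
      · rw [Prod.mk.injEq] at h1 h2
        rw [h1.2, h2.2]
      · rw [Prod.mk.injEq] at h1
        exact absurd (h1.1 ▸ h2) (hp j2)
      · rw [Prod.mk.injEq] at h2
        exact absurd (h2.1 ▸ h1) (hp j1)
      · exact hcons p' j1 j2 h1 h2
    have hfj : ∀ j : Fin 2, ∃ H : Finset (Npairs δ), ∀ h : Npairs δ → Fin 2,
        (∀ q ∈ H, ∀ j', (q, j') ∈ insert (p, j) mset → h q = j') →
        a ≤ H.sup (fun q => pick δ q (h q)) ∨ b ≤ H.sup (fun q => pick δ q (h q)) := by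
      intro j
      by_contra hno
      push_neg at hno
      exact hfail j ⟨hconsins j, fun H => by
        obtain ⟨h, h1, h2, h3⟩ := hno H
        exact ⟨h, h1, h2, h3⟩⟩
    obtain ⟨H₀, hH₀⟩ := hfj 0
    obtain ⟨H₁, hH₁⟩ := hfj 1
    obtain ⟨h, hagr, ha, hb⟩ := hinv (H₀ ∪ H₁)
    have hagr' : ∀ (j : Fin 2) (Hj : Finset (Npairs δ)), Hj ⊆ H₀ ∪ H₁ → h p = j →
        (∀ q ∈ Hj, ∀ j', (q, j') ∈ insert (p, j) mset → h q = j') := by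
      intro j Hj hHj hpj q hq j' hj'
      rcases Set.mem_insert_iff.1 hj' with heq | hmem
      · rw [Prod.mk.injEq] at heq
        rw [heq.1, hpj, heq.2]
      · exact hagr q (hHj hq) j' hmem
    have hdone : ∀ (j : Fin 2) (Hj : Finset (Npairs δ)), Hj ⊆ H₀ ∪ H₁ → h p = j →
        (∀ h' : Npairs δ → Fin 2,
          (∀ q ∈ Hj, ∀ j', (q, j') ∈ insert (p, j) mset → h' q = j') →
          a ≤ Hj.sup (fun q => pick δ q (h' q)) ∨ b ≤ Hj.sup (fun q => pick δ q (h' q))) →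
        False := by
      intro j Hj hHj hpj hH
      rcases hH h (hagr' j Hj hHj hpj) with hle | hle
      · exact ha (le_trans hle (Finset.sup_mono hHj))
      · exact hb (le_trans hle (Finset.sup_mono hHj))
    have hj2 : h p = 0 ∨ h p = 1 := by
      have : ∀ j : Fin 2, j = 0 ∨ j = 1 := by decide
      exact this (h p)
    rcases hj2 with hp0 | hp1
    · exact hdone 0 H₀ Finset.subset_union_left hp0 hH₀
    · exact hdone 1 H₁ Finset.subset_union_right hp1 hH₁
  set f : Npairs δ → Fin 2 := fun p => (htotal p).choose with hf
  have hfspec : ∀ p, (p, f p) ∈ mset := fun p => (htotal p).choose_spec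
  have hkey : ∀ T : Finset (Npairs δ),
      ¬ a ≤ T.sup (fun p => pick δ p (f p)) ∧ ¬ b ≤ T.sup (fun p => pick δ p (f p)) := by
    intro T
    obtain ⟨h, hagr, ha, hb⟩ := hinv T
    have hsupeq : T.sup (fun p => pick δ p (f p)) = T.sup (fun p => pick δ p (h p)) :=
      Finset.sup_congr rfl (fun p hp => by rw [hagr p hp (f p) (hfspec p)])
    rw [hsupeq]
    exact ⟨ha, hb⟩
  exact ⟨f, fun T => (hkey T).1, fun T => (hkey T).2⟩
private lemma exists_sep_point
    (hEmp : ∀ a b : S, δ a b → ⊥ < a ∧ ⊥ < b)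
    (hD1 : ∀ a b c₀ c₁ : S, b ≤ a ⊔ c₀ → b ≤ a ⊔ c₁ → ¬ δ c₀ c₁ → b ≤ a)
    (a b : S) (hnab : ¬ a ≤ b) :
    ∃ f, f ∈ phi δ a ∧ f ∉ phi δ b := by
  classical
  have hnd : ¬ δ (⊥ : S) b := fun hd => absurd (hEmp _ _ hd).1 (lt_irrefl _)
  set pb : Npairs δ := ⟨(⊥, b), hnd⟩ with hpb
  set 𝒮 : Set (Set (Npairs δ × Fin 2)) :=
    {s | (∀ p j j', (p, j) ∈ s → (p, j') ∈ s → j = j') ∧ (pb, 1) ∈ s ∧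
      ∀ F : Finset (Npairs δ × Fin 2), ↑F ⊆ s →
        ¬ a ≤ F.sup (fun q => pick δ q.1 q.2)} with h𝒮
  have hbase : ({(pb, 1)} : Set (Npairs δ × Fin 2)) ∈ 𝒮 := by
    refine ⟨?_, rfl, ?_⟩
    · intro p j j' hj hj'
      rw [Set.mem_singleton_iff, Prod.mk.injEq] at hj hj'
      rw [hj.2, hj'.2]
    · intro F hF hle
      have hsup : F.sup (fun q => pick δ q.1 q.2) ≤ b := by
        apply Finset.sup_le
        intro q hq
        have := hF hq
        rw [Set.mem_singleton_iff] at this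
        rw [this]
        exact le_of_eq (pick_one δ pb)
      exact hnab (le_trans hle hsup)
  have hchain : ∀ C ⊆ 𝒮, IsChain (· ⊆ ·) C → C.Nonempty → ∃ ub ∈ 𝒮, ∀ s ∈ C, s ⊆ ub := by
    intro C hC hch hne
    refine ⟨⋃₀ C, ⟨?_, ?_, ?_⟩, fun s hs => Set.subset_sUnion_of_mem hs⟩
    · rintro p j j' hj hj'
      obtain ⟨s1, hs1, hj⟩ := hj
      obtain ⟨s2, hs2, hj'⟩ := hj'
      rcases hch.total hs1 hs2 with hss | hss
      · exact (hC hs2).1 p j j' (hss hj) hj'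
      · exact (hC hs1).1 p j j' hj (hss hj')
    · obtain ⟨s, hs⟩ := hne
      exact Set.mem_sUnion.2 ⟨s, hs, (hC hs).2.1⟩
    · intro F hF
      obtain ⟨s', hs', hsub⟩ := chain_finite_subset hch hne F.finite_toSet hF
      exact (hC hs').2.2 F hsub
  obtain ⟨mset, -, hmax⟩ := zorn_subset_nonempty 𝒮 hchain _ hbase
  have hcons := hmax.1.1
  have hpbm := hmax.1.2.1
  have hinv := hmax.1.2.2
  have htotal : ∀ p : Npairs δ, ∃ j, (p, j) ∈ mset := by
    by_contra hcon
    push_neg at hcon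
    obtain ⟨p, hp⟩ := hcon
    have hfail : ∀ j : Fin 2, insert (p, j) mset ∉ 𝒮 := by
      intro j hins
      have hsub : insert (p, j) mset ⊆ mset := hmax.2 hins (Set.subset_insert _ _)
      exact hp j (hsub (Set.mem_insert _ _))
    have hconsins : ∀ j : Fin 2, ∀ p' j1 j2,
        (p', j1) ∈ insert (p, j) mset → (p', j2) ∈ insert (p, j) mset → j1 = j2 := by
      intro j p' j1 j2 h1 h2
      rcases Set.mem_insert_iff.1 h1 with h1 | h1 <;>
        rcases Set.mem_insert_iff.1 h2 with h2 | h2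
      · rw [Prod.mk.injEq] at h1 h2
        rw [h1.2, h2.2]
      · rw [Prod.mk.injEq] at h1
        exact absurd (h1.1 ▸ h2) (hp j2)
      · rw [Prod.mk.injEq] at h2
        exact absurd (h2.1 ▸ h1) (hp j1)
      · exact hcons p' j1 j2 h1 h2
    have hfj : ∀ j : Fin 2, ∃ F : Finset (Npairs δ × Fin 2),
        ↑F ⊆ insert (p, j) mset ∧ a ≤ F.sup (fun q => pick δ q.1 q.2) := by
      intro j
      by_contra hno
      push_neg at hno
      exact hfail j ⟨hconsins j, Set.mem_insert_of_mem _ hpbm, hno⟩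
    obtain ⟨F₀, hF₀s, hF₀⟩ := hfj 0
    obtain ⟨F₁, hF₁s, hF₁⟩ := hfj 1
    set F : Finset (Npairs δ × Fin 2) := F₀.erase (p, 0) ∪ F₁.erase (p, 1) with hF
    have hFs : ↑F ⊆ mset := by
      intro q hq
      rw [hF] at hq
      rcases Finset.mem_union.1 hq with hq | hq
      · have hne := Finset.ne_of_mem_erase hq
        rcases Set.mem_insert_iff.1 (hF₀s (Finset.mem_of_mem_erase hq)) with heq | hm
        · exact absurd heq hne
        · exact hm
      · have hne := Finset.ne_of_mem_erase hq
        rcases Set.mem_insert_iff.1 (hF₁s (Finset.mem_of_mem_erase hq)) with heq | hm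
        · exact absurd heq hne
        · exact hm
    have hbound : ∀ (j : Fin 2) (Fj : Finset (Npairs δ × Fin 2)),
        Fj.erase (p, j) ⊆ F →
        Fj.sup (fun q => pick δ q.1 q.2) ≤ F.sup (fun q => pick δ q.1 q.2) ⊔ pick δ p j := by
      intro j Fj hsubF
      apply Finset.sup_le
      intro q hq
      by_cases hqe : q = (p, j)
      · rw [hqe]
        exact le_sup_right
      · refine le_trans ?_ (le_sup_left (b := pick δ p j))
        exact Finset.le_sup (f := fun q => pick δ q.1 q.2) (hsubF (Finset.mem_erase.2 ⟨hqe, hq⟩))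
    have ha0 : a ≤ F.sup (fun q => pick δ q.1 q.2) ⊔ p.1.1 := by
      have := le_trans hF₀ (hbound 0 F₀ Finset.subset_union_left)
      rwa [pick_zero] at this
    have ha1 : a ≤ F.sup (fun q => pick δ q.1 q.2) ⊔ p.1.2 := by
      have := le_trans hF₁ (hbound 1 F₁ Finset.subset_union_right)
      rwa [pick_one] at this
    exact hinv F hFs (hD1 _ _ _ _ ha0 ha1 p.2)
  set f : Npairs δ → Fin 2 := fun p => (htotal p).choose with hf
  have hfspec : ∀ p, (p, f p) ∈ mset := fun p => (htotal p).choose_spec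
  refine ⟨f, ?_, ?_⟩
  · intro T hle
    have himg : ↑(T.image (fun p => (p, f p))) ⊆ mset := by
      intro q hq
      rw [Finset.coe_image] at hq
      obtain ⟨p, _, rfl⟩ := hq
      exact hfspec p
    apply hinv _ himg
    rwa [Finset.sup_image]
  · intro hmem
    apply hmem {pb}
    have hfpb : f pb = 1 := hcons pb (f pb) 1 (hfspec pb) hpbm
    rw [Finset.sup_singleton, hfpb, pick_one]
private lemma phi_bot : phi δ (⊥ : S) = ∅ := by
  ext f
  simp only [Set.mem_empty_iff_false, iff_false]
  intro hf
  exact hf ∅ bot_le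

private lemma phi_sup (a b : S) : phi δ (a ⊔ b) = phi δ a ∪ phi δ b := by
  classical
  ext f
  constructor
  · intro hf
    by_contra hn
    rw [Set.mem_union] at hn
    push_neg at hn
    obtain ⟨hna, hnb⟩ := hn
    simp only [phi, Set.mem_setOf_eq] at hna hnb
    push_neg at hna hnb
    obtain ⟨T₁, hT₁⟩ := hna
    obtain ⟨T₂, hT₂⟩ := hnb
    apply hf (T₁ ∪ T₂)
    exact sup_le (le_trans hT₁ (Finset.sup_mono Finset.subset_union_left))
      (le_trans hT₂ (Finset.sup_mono Finset.subset_union_right))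
  · intro hf T hle
    rcases hf with hf | hf
    · exact hf T (le_trans le_sup_left hle)
    · exact hf T (le_trans le_sup_right hle)

private lemma delta_of_common (a b : S) (f : Npairs δ → Fin 2)
    (hfa : f ∈ phi δ a) (hfb : f ∈ phi δ b) : δ a b := by
  by_contra hn
  set p : Npairs δ := ⟨(a, b), hn⟩ with hp
  have h2 : f p = 0 ∨ f p = 1 := by
    have hfin : ∀ j : Fin 2, j = 0 ∨ j = 1 := by decide
    exact hfin (f p)
  rcases h2 with h | h
  · apply hfa {p}
    rw [Finset.sup_singleton, h, pick_zero]
  · apply hfb {p}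
    rw [Finset.sup_singleton, h, pick_one]
end Repr

/-- For a weak contact semilattice `S`, the following are equivalent:
(1) `S` embeds into a Boolean algebra with overlap contact;
(2) `S` embeds into a distributive lattice with an additive weak contact relation;
(3) `S` satisfies conditions (D1) and (D2). -/
theorem contact_semilattice_tfae {S : Type u} [SemilatticeSup S] [OrderBot S]
    (δ : S → S → Prop)
    (hSym : ∀ a b : S, δ a b → δ b a)
    (hEmp : ∀ a b : S, δ a b → ⊥ < a ∧ ⊥ < b)
    (hExt : ∀ a b a₁ b₁ : S, δ a b → a ≤ a₁ → b ≤ b₁ → δ a₁ b₁)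
    (hRef : ∀ n : S, n ≠ ⊥ → δ n n) :
    List.TFAE
      [ -- (1) embedding into a Boolean algebra with overlap contact
        (∃ (B : Type u) (_ : BooleanAlgebra B) (φ : S → B),
          Function.Injective φ ∧ φ ⊥ = ⊥ ∧
          (∀ a b : S, φ (a ⊔ b) = φ a ⊔ φ b) ∧
          (∀ a b : S, δ a b ↔ φ a ⊓ φ b ≠ ⊥)),
        -- (2) embedding into a distributive lattice with an additive weak contact
        (∃ (L : Type u) (_ : DistribLattice L) (_ : OrderBot L)
          (δL : L → L → Prop) (φ : S → L),
          (∀ a b : L, δL a b → δL b a) ∧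
          (∀ a b : L, δL a b → ⊥ < a ∧ ⊥ < b) ∧
          (∀ a b a₁ b₁ : L, δL a b → a ≤ a₁ → b ≤ b₁ → δL a₁ b₁) ∧
          (∀ n : L, n ≠ ⊥ → δL n n) ∧
          (∀ a b c : L, δL a (b ⊔ c) → δL a b ∨ δL a c) ∧
          Function.Injective φ ∧ φ ⊥ = ⊥ ∧
          (∀ a b : S, φ (a ⊔ b) = φ a ⊔ φ b) ∧
          (∀ a b : S, δ a b ↔ δL (φ a) (φ b))),
        -- (3) (D1) and (D2)
        ((∀ a b c₀ c₁ : S, b ≤ a ⊔ c₀ → b ≤ a ⊔ c₁ → ¬ δ c₀ c₁ → b ≤ a) ∧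
          (∀ (n : ℕ) (a b : S) (c : Fin n → Fin 2 → S),
            (∀ i, ¬ δ (c i 0) (c i 1)) →
            (∀ f : Fin n → Fin 2,
              b ≤ Finset.univ.sup (fun i => c i (f i)) ∨
              a ≤ Finset.univ.sup (fun i => c i (f i))) →
            ¬ δ b a)) ] := by
  tfae_have 1 → 2 := by
    rintro ⟨B, instB, φ, hinj, hbot, hsup, hiff⟩
    letI := instB
    refine ⟨B, inferInstance, inferInstance, fun x y => x ⊓ y ≠ ⊥, φ,
      ?_, ?_, ?_, ?_, ?_, hinj, hbot, hsup, hiff⟩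
    · intro x y h
      rwa [inf_comm] at h
    · intro x y h
      refine ⟨bot_lt_iff_ne_bot.2 ?_, bot_lt_iff_ne_bot.2 ?_⟩
      · rintro rfl
        exact h (by simp)
      · rintro rfl
        exact h (by simp)
    · intro x y x₁ y₁ h hx hy hbot2
      exact h (le_bot_iff.1 (le_trans (inf_le_inf hx hy) hbot2.le))
    · intro nn hnn
      rwa [inf_idem]
    · intro x y z h
      rw [inf_sup_left] at h
      by_contra hn
      push_neg at hn
      obtain ⟨h1, h2⟩ := hn
      exact h (by rw [h1, h2]; simp)
  tfae_have 2 → 3 := by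
    rintro ⟨L, instL, instLb, δL, φ, hLsym, hLemp, hLext, hLref, hLadd, hinj, hbot, hsup, hiff⟩
    letI := instL
    letI := instLb
    have hmono : ∀ x y : S, x ≤ y → φ x ≤ φ y := by
      intro x y hxy
      have h' : φ x ⊔ φ y = φ y := by
        rw [← hsup, sup_eq_right.2 hxy]
      exact sup_eq_right.1 h'
    have hrefl : ∀ x y : S, φ x ≤ φ y → x ≤ y := by
      intro x y h
      have h' : φ (x ⊔ y) = φ y := by
        rw [hsup]
        exact sup_eq_right.2 h
      exact sup_eq_right.1 (hinj h')
    have hφfin : ∀ (n : ℕ) (v : Fin n → S),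
        φ (Finset.univ.sup v) = Finset.univ.sup (fun i => φ (v i)) := by
      intro n v
      exact Finset.comp_sup_eq_sup_comp φ hsup hbot
    refine ⟨?_, ?_⟩
    · intro a b c₀ c₁ h0 h1 hnc
      apply hrefl
      refine D1_of_distrib δL hLext hLref (φ a) (φ b) (φ c₀) (φ c₁) ?_ ?_ ?_
      · rw [← hsup]
        exact hmono _ _ h0
      · rw [← hsup]
        exact hmono _ _ h1
      · intro hd
        exact hnc ((hiff c₀ c₁).2 hd)
    · intro n a b c hc hyp hba
      refine D2_of_additive δL hLsym hLemp hLext hLref hLadd (φ a) (φ b)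
        (fun i j => φ (c i j)) (fun i hd => hc i ((hiff _ _).2 hd)) ?_ ((hiff b a).1 hba)
      intro f
      rcases hyp f with h | h
      · left
        rw [← hφfin]
        exact hmono _ _ h
      · right
        rw [← hφfin]
        exact hmono _ _ h
  tfae_have 3 → 1 := by
    rintro ⟨hD1, hD2⟩
    refine ⟨Set (Npairs δ → Fin 2), inferInstance, phi δ, ?_, phi_bot δ, phi_sup δ, ?_⟩
    · intro x y hxy
      by_contra hne
      have hor : ¬ x ≤ y ∨ ¬ y ≤ x := by
        by_contra hc
        push_neg at hc
        exact hne (le_antisymm hc.1 hc.2)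
      rcases hor with h | h
      · obtain ⟨f, hfa, hfb⟩ := exists_sep_point δ hEmp hD1 x y h
        rw [hxy] at hfa
        exact hfb hfa
      · obtain ⟨f, hfa, hfb⟩ := exists_sep_point δ hEmp hD1 y x h
        rw [← hxy] at hfa
        exact hfb hfa
    · intro x y
      constructor
      · intro hd hbot2
        obtain ⟨f, hfa, hfb⟩ := exists_common_point δ hSym hD2 x y hd
        have hmem : f ∈ phi δ x ⊓ phi δ y := ⟨hfa, hfb⟩
        rw [hbot2] at hmem
        simpa using hmem
      · intro hne
        obtain ⟨f, hfa, hfb⟩ := Set.nonempty_iff_ne_empty.2 hne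
        exact delta_of_common δ x y f hfa hfb
  tfae_finish
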